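/- Let r ≥ 1, let B ⊆ Fin r with |B| = w ≥ 1, let σ be a uniformly random permutation of Fin r, and let ℓ ∈ ℕ. Then the probability that there exists j with j + ℓ ≤ r such that σ(b) ∉ {j, j+1, …, j+ℓ−1} for every b ∈ B (i.e., some interval of ℓ consecutive positions contains no element of the image σ(B)) is at most r · exp(−ℓ·w/r). -/

import Mathlib

open scoped Classical

lemma desc_pow (m n : ℕ) (h : m ≤ n) : ∀ k : ℕ,
    m.descFactorial k * n ^ k ≤ n.descFactorial k * m ^ k
  | 0 => by simp
  | (k+1) => by
    have ih := desc_pow m n h k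
    rw [Nat.descFactorial_succ, Nat.descFactorial_succ, pow_succ, pow_succ]
    have h1 : (m - k) * n ≤ (n - k) * m := by
      rcases Nat.le_total k m with hk | hk
      · rw [Nat.sub_mul, Nat.sub_mul, Nat.mul_comm n m]
        have : k * m ≤ k * n := Nat.mul_le_mul_left _ h
        omega
      · rw [Nat.sub_eq_zero_of_le hk]
        simp
    calc (m - k) * m.descFactorial k * (n ^ k * n)
        = ((m - k) * n) * (m.descFactorial k * n ^ k) := by ring
      _ ≤ ((n - k) * m) * (n.descFactorial k * m ^ k) := Nat.mul_le_mul h1 ih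
      _ = (n - k) * n.descFactorial k * (m ^ k * m) := by ring

-- fiber bound
lemma fiber_bound (r w : ℕ) (B T : Finset (Fin r)) (hB : B.card = w) (hT : T.card = w)
    (s : Finset (Equiv.Perm (Fin r))) (hs : ∀ σ ∈ s, B.image σ = T) :
    s.card ≤ w.factorial * (r - w).factorial := by
  classical
  have key : Fintype.card {σ // σ ∈ s} ≤
      Fintype.card ((↥B ↪ ↥T) × (↥(Bᶜ) ↪ ↥(Tᶜ))) := by
    apply Fintype.card_le_of_injective (fun σ =>
      (⟨fun b => ⟨σ.1 b.1, by
          have := hs σ.1 σ.2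
          exact this ▸ Finset.mem_image_of_mem _ b.2⟩,
        fun a b h => by
          apply Subtype.ext
          exact σ.1.injective (congrArg Subtype.val h)⟩,
       ⟨fun c => ⟨σ.1 c.1, by
          have himg := hs σ.1 σ.2
          simp only [Finset.mem_compl]
          intro hmem
          rw [← himg] at hmem
          obtain ⟨b, hb, hbe⟩ := Finset.mem_image.mp hmem
          have : b = c.1 := σ.1.injective hbe
          have hc := c.2
          rw [Finset.mem_compl] at hc
          exact hc (this ▸ hb)⟩,
        fun a b h => by
          apply Subtype.ext
          exact σ.1.injective (congrArg Subtype.val h)⟩))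
    intro σ τ h
    obtain ⟨h1, h2⟩ := Prod.mk.injEq _ _ _ _ ▸ h
    apply Subtype.ext
    apply Equiv.ext
    intro x
    by_cases hx : x ∈ B
    · have := congrArg (fun e => (Function.Embedding.toFun e ⟨x, hx⟩).1) h1
      simpa using this
    · have hx' : x ∈ Bᶜ := Finset.mem_compl.mpr hx
      have := congrArg (fun e => (Function.Embedding.toFun e ⟨x, hx'⟩).1) h2
      simpa using this
  rw [Fintype.card_coe] at key
  calc s.card ≤ _ := key
    _ = w.factorial * (r - w).factorial := by
        rw [Fintype.card_prod, Fintype.card_embedding_eq, Fintype.card_embedding_eq]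
        simp only [Fintype.card_coe, hB, hT, Finset.card_compl, Fintype.card_fin]
        rw [Nat.descFactorial_self, Nat.descFactorial_self]

lemma interval_bound (r ℓ w : ℕ) (hr : 1 ≤ r) (B : Finset (Fin r)) (hB : B.card = w)
    (fiber : ∀ (T : Finset (Fin r)), T.card = w →
      ∀ s : Finset (Equiv.Perm (Fin r)), (∀ σ ∈ s, B.image σ = T) →
        s.card ≤ w.factorial * (r - w).factorial)
    (j : ℕ) (hj : j + ℓ ≤ r) :
    (Finset.univ.filter (fun σ : Equiv.Perm (Fin r) =>
        ∀ b ∈ B, ((σ b : ℕ) < j ∨ j + ℓ ≤ (σ b : ℕ)))).card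
      ≤ w.factorial * (r - w).factorial * ((r - ℓ).choose w) := by
  classical
  set S : Finset (Fin r) := Finset.univ.filter (fun x : Fin r => (x : ℕ) < j ∨ j + ℓ ≤ (x : ℕ)) with hSdef
  have hScard : S.card ≤ r - ℓ := by
    have hsplit := Finset.card_filter_add_card_filter_not
      (s := (Finset.univ : Finset (Fin r)))
      (p := fun x : Fin r => (x : ℕ) < j ∨ j + ℓ ≤ (x : ℕ))
    have hneg : ℓ ≤ (Finset.univ.filter (fun x : Fin r =>
        ¬((x : ℕ) < j ∨ j + ℓ ≤ (x : ℕ)))).card := by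
      have key : (Finset.range ℓ).card ≤ (Finset.univ.filter (fun x : Fin r =>
          ¬((x : ℕ) < j ∨ j + ℓ ≤ (x : ℕ)))).card := by
        apply Finset.card_le_card_of_injOn
          (f := fun i => (⟨(j + i) % r, Nat.mod_lt _ hr⟩ : Fin r))
        · intro i hi
          simp only [Finset.mem_coe, Finset.mem_range] at hi
          simp only [Finset.mem_coe, Finset.mem_filter, Finset.mem_univ, true_and]
          rw [Nat.mod_eq_of_lt (by omega)]
          show ¬((j + i) < j ∨ j + ℓ ≤ j + i)
          omega
        · intro a ha b hb hab
          simp only [Finset.mem_coe, Finset.mem_range] at ha hb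
          have := congrArg Fin.val hab
          simp only at this
          rw [Nat.mod_eq_of_lt (by omega), Nat.mod_eq_of_lt (by omega)] at this
          omega
      simpa using key
    have hcard : (Finset.univ : Finset (Fin r)).card = r := by simp
    rw [← hSdef, hcard] at hsplit
    omega
  set A := Finset.univ.filter (fun σ : Equiv.Perm (Fin r) =>
        ∀ b ∈ B, ((σ b : ℕ) < j ∨ j + ℓ ≤ (σ b : ℕ))) with hAdef
  have hmaps : ∀ σ ∈ A, B.image σ ∈ S.powersetCard w := by
    intro σ hσ
    rw [Finset.mem_powersetCard]
    constructor
    · intro x hx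
      obtain ⟨b, hb, rfl⟩ := Finset.mem_image.mp hx
      simp only [hSdef, Finset.mem_filter, Finset.mem_univ, true_and]
      exact (Finset.mem_filter.mp hσ).2 b hb
    · rw [Finset.card_image_of_injective _ σ.injective, hB]
  have := Finset.card_le_mul_card_image_of_maps_to hmaps
    (w.factorial * (r - w).factorial)
    (fun T hT => by
      have hTc : T.card = w := (Finset.mem_powersetCard.mp hT).2
      exact fiber T hTc _ (fun σ hσ => (Finset.mem_filter.mp hσ).2))
  calc A.card ≤ w.factorial * (r - w).factorial * (S.powersetCard w).card := this
    _ ≤ _ := by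
        rw [Finset.card_powersetCard]
        exact Nat.mul_le_mul_left _ (Nat.choose_le_choose _ hScard)


/-- for a uniformly random permutation `σ` of `Fin r` and `B ⊆ Fin r` with
`|B| = w ≥ 1`, the probability that some interval of `ℓ` consecutive positions contains no
element of `σ(B)` is at most `r · exp(−ℓw/r)`. -/
theorem stmt_16 (r : ℕ) (hr : 1 ≤ r) (B : Finset (Fin r)) (w : ℕ)
    (hB : B.card = w) (hw : 1 ≤ w) (ℓ : ℕ) :
    ((Finset.univ.filter (fun σ : Equiv.Perm (Fin r) =>
        ∃ j : ℕ, j + ℓ ≤ r ∧ ∀ b ∈ B, ((σ b : ℕ) < j ∨ j + ℓ ≤ (σ b : ℕ)))).card : ℝ)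
        / (Nat.factorial r)
      ≤ r * Real.exp (-(ℓ * w : ℝ) / r) := by
  classical
  have hrR : (0 : ℝ) < r := by exact_mod_cast hr
  have hfacpos : (0 : ℝ) < (r.factorial : ℝ) := by exact_mod_cast r.factorial_pos
  rcases Nat.eq_zero_or_pos ℓ with hl0 | hl1
  · -- ℓ = 0 : probability ≤ 1 ≤ r
    subst hl0
    have hle1 : ((Finset.univ.filter (fun σ : Equiv.Perm (Fin r) =>
        ∃ j : ℕ, j + 0 ≤ r ∧ ∀ b ∈ B, ((σ b : ℕ) < j ∨ j + 0 ≤ (σ b : ℕ)))).card : ℝ)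
        ≤ (r.factorial : ℝ) := by
      have := Finset.card_filter_le (Finset.univ : Finset (Equiv.Perm (Fin r)))
        (fun σ : Equiv.Perm (Fin r) =>
          ∃ j : ℕ, j + 0 ≤ r ∧ ∀ b ∈ B, ((σ b : ℕ) < j ∨ j + 0 ≤ (σ b : ℕ)))
      have hcu : (Finset.univ : Finset (Equiv.Perm (Fin r))).card = r.factorial := by
        rw [Finset.card_univ, Fintype.card_perm, Fintype.card_fin]
      exact_mod_cast hcu ▸ this
    have : ((Finset.univ.filter (fun σ : Equiv.Perm (Fin r) =>
        ∃ j : ℕ, j + 0 ≤ r ∧ ∀ b ∈ B, ((σ b : ℕ) < j ∨ j + 0 ≤ (σ b : ℕ)))).card : ℝ)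
        / (r.factorial : ℝ) ≤ 1 := by
      rw [div_le_one hfacpos]; exact hle1
    refine le_trans (b := 1) (by convert this; rfl) ?_
    have : -(((0:ℕ) * w : ℝ)) / r = 0 := by simp
    rw [this, Real.exp_zero, mul_one]
    exact_mod_cast hr
  rcases le_or_gt ℓ r with hℓr | hℓr
  swap
  · -- ℓ > r : event impossible
    have hempty : (Finset.univ.filter (fun σ : Equiv.Perm (Fin r) =>
        ∃ j : ℕ, j + ℓ ≤ r ∧ ∀ b ∈ B, ((σ b : ℕ) < j ∨ j + ℓ ≤ (σ b : ℕ)))) = ∅ := by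
      apply Finset.filter_false_of_mem
      rintro σ - ⟨j, hj, -⟩
      omega
    rw [hempty]
    simp only [Finset.card_empty, Nat.cast_zero, zero_div]
    positivity
  -- main case : 1 ≤ ℓ ≤ r
  have hwr : w ≤ r := by
    have := Finset.card_le_univ B
    rwa [hB, Fintype.card_fin] at this
  set A : ℕ → Finset (Equiv.Perm (Fin r)) := fun j =>
    Finset.univ.filter (fun σ : Equiv.Perm (Fin r) =>
      ∀ b ∈ B, ((σ b : ℕ) < j ∨ j + ℓ ≤ (σ b : ℕ))) with hAdef
  have hsub : (Finset.univ.filter (fun σ : Equiv.Perm (Fin r) =>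
      ∃ j : ℕ, j + ℓ ≤ r ∧ ∀ b ∈ B, ((σ b : ℕ) < j ∨ j + ℓ ≤ (σ b : ℕ))))
      ⊆ (Finset.range (r - ℓ + 1)).biUnion A := by
    intro σ hσ
    obtain ⟨j, hj, hcond⟩ := (Finset.mem_filter.mp hσ).2
    refine Finset.mem_biUnion.mpr ⟨j, Finset.mem_range.mpr (by omega), ?_⟩
    exact Finset.mem_filter.mpr ⟨Finset.mem_univ _, hcond⟩
  have hAj : ∀ j ∈ Finset.range (r - ℓ + 1),
      (A j).card ≤ w.factorial * (r - w).factorial * ((r - ℓ).choose w) := by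
    intro j hj
    refine interval_bound r ℓ w hr B hB (fun T hT s hs => fiber_bound r w B T hB hT s hs) j ?_
    simp only [Finset.mem_range] at hj
    omega
  have hN : (Finset.univ.filter (fun σ : Equiv.Perm (Fin r) =>
      ∃ j : ℕ, j + ℓ ≤ r ∧ ∀ b ∈ B, ((σ b : ℕ) < j ∨ j + ℓ ≤ (σ b : ℕ)))).card
      ≤ (r - ℓ + 1) * ((r - w).factorial * (r - ℓ).descFactorial w) := by
    calc _ ≤ ((Finset.range (r - ℓ + 1)).biUnion A).card := Finset.card_le_card hsub
      _ ≤ ∑ j ∈ Finset.range (r - ℓ + 1), (A j).card := Finset.card_biUnion_le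
      _ ≤ ∑ _j ∈ Finset.range (r - ℓ + 1),
            (w.factorial * (r - w).factorial * ((r - ℓ).choose w)) :=
          Finset.sum_le_sum hAj
      _ = (r - ℓ + 1) * (w.factorial * (r - w).factorial * ((r - ℓ).choose w)) := by
          rw [Finset.sum_const, Finset.card_range, smul_eq_mul]
      _ = (r - ℓ + 1) * ((r - w).factorial * (r - ℓ).descFactorial w) := by
          rw [Nat.descFactorial_eq_factorial_mul_choose]
          ring
  -- pass to the reals
  set a : ℝ := ((r - ℓ).descFactorial w : ℝ) with hadef
  set b : ℝ := (r.descFactorial w : ℝ) with hbdef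
  have ha0 : 0 ≤ a := Nat.cast_nonneg _
  have hb0 : (0 : ℝ) < b := by
    have : r.descFactorial w ≠ 0 := by
      intro h
      exact absurd (Nat.descFactorial_eq_zero_iff_lt.mp h) (not_lt.mpr hwr)
    rw [hbdef]
    exact_mod_cast Nat.pos_of_ne_zero this
  have hfac : (r.factorial : ℝ) = ((r - w).factorial : ℝ) * b := by
    rw [hbdef]
    exact_mod_cast (Nat.factorial_mul_descFactorial hwr).symm
  have hfw0 : (0 : ℝ) < ((r - w).factorial : ℝ) := by exact_mod_cast (r - w).factorial_pos
  have step1 : ((Finset.univ.filter (fun σ : Equiv.Perm (Fin r) =>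
      ∃ j : ℕ, j + ℓ ≤ r ∧ ∀ b ∈ B, ((σ b : ℕ) < j ∨ j + ℓ ≤ (σ b : ℕ)))).card : ℝ)
      / (r.factorial : ℝ) ≤ ((r - ℓ + 1 : ℕ) : ℝ) * (a / b) := by
    have h1 : ((Finset.univ.filter (fun σ : Equiv.Perm (Fin r) =>
        ∃ j : ℕ, j + ℓ ≤ r ∧ ∀ b ∈ B, ((σ b : ℕ) < j ∨ j + ℓ ≤ (σ b : ℕ)))).card : ℝ)
        ≤ ((r - ℓ + 1 : ℕ) : ℝ) * (((r - w).factorial : ℝ) * a) := by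
      rw [hadef]
      exact_mod_cast hN
    rw [div_le_iff₀ hfacpos, hfac]
    calc _ ≤ ((r - ℓ + 1 : ℕ) : ℝ) * (((r - w).factorial : ℝ) * a) := h1
      _ = ((r - ℓ + 1 : ℕ) : ℝ) * (a / b) * (((r - w).factorial : ℝ) * b) := by
          field_simp
  have step2 : a / b ≤ (1 - (ℓ : ℝ) / r) ^ w := by
    have hnat := desc_pow (r - ℓ) r (Nat.sub_le _ _) w
    have hcast : a * ((r : ℝ)) ^ w ≤ b * (((r : ℝ)) - ℓ) ^ w := by
      have hsubc : (((r - ℓ : ℕ)) : ℝ) = (r : ℝ) - ℓ := Nat.cast_sub hℓr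
      rw [← hsubc, hadef, hbdef]
      exact_mod_cast hnat
    have hrpow : (0 : ℝ) < (r : ℝ) ^ w := pow_pos hrR w
    rw [div_le_iff₀ hb0]
    have expand : (1 - (ℓ : ℝ) / r) ^ w = ((r : ℝ) - ℓ) ^ w / ((r : ℝ)) ^ w := by
      rw [← div_pow]
      congr 1
      field_simp
    rw [expand, div_mul_eq_mul_div, le_div_iff₀ hrpow]
    calc a * (r : ℝ) ^ w ≤ b * ((r : ℝ) - ℓ) ^ w := hcast
      _ = ((r : ℝ) - ℓ) ^ w * b := by ring
  have step3 : (1 - (ℓ : ℝ) / r) ^ w ≤ Real.exp (-((ℓ : ℝ) * w) / r) := by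
    have hbase : 0 ≤ 1 - (ℓ : ℝ) / r := by
      have : (ℓ : ℝ) / r ≤ 1 := by
        rw [div_le_one hrR]
        exact_mod_cast hℓr
      linarith
    have hexp : 1 - (ℓ : ℝ) / r ≤ Real.exp (-((ℓ : ℝ) / r)) := by
      have := Real.add_one_le_exp (-((ℓ : ℝ) / r))
      linarith
    calc (1 - (ℓ : ℝ) / r) ^ w ≤ (Real.exp (-((ℓ : ℝ) / r))) ^ w :=
          pow_le_pow_left₀ hbase hexp w
      _ = Real.exp ((w : ℝ) * (-((ℓ : ℝ) / r))) := (Real.exp_nat_mul _ w).symm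
      _ = Real.exp (-((ℓ : ℝ) * w) / r) := by
          congr 1
          ring
  have hfactor : ((r - ℓ + 1 : ℕ) : ℝ) ≤ (r : ℝ) := by
    exact_mod_cast (show r - ℓ + 1 ≤ r by omega)
  calc _ ≤ ((r - ℓ + 1 : ℕ) : ℝ) * (a / b) := step1
    _ ≤ (r : ℝ) * ((1 - (ℓ : ℝ) / r) ^ w) := by
        apply mul_le_mul hfactor (step2) (div_nonneg ha0 hb0.le) hrR.le
    _ ≤ (r : ℝ) * Real.exp (-((ℓ : ℝ) * w) / r) :=
        mul_le_mul_of_nonneg_left step3 hrR.le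
    _ = (r : ℝ) * Real.exp (-((ℓ : ℕ) * (w : ℕ) : ℝ) / r) := by norm_num
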